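/- Let N_a(x) = (x + a/x)/2 and let x_n(a) be defined by x_0(a) = c > 0 and x_{n+1}(a) = N_a(x_n(a)). Then for each n, a ↦ x_n(a) is differentiable on (0,∞), and the sequence of derivatives x_n'(a) converges pointwise to 1/(2√a) for every a > 0. -/

import Mathlib

theorem stmt_4 (c : ℝ) (hc : 0 < c) (X : ℕ → ℝ → ℝ)
    (hX0 : ∀ a : ℝ, X 0 a = c)
    (hXs : ∀ n : ℕ, ∀ a : ℝ, X (n + 1) a = (X n a + a / X n a) / 2) :
    (∀ n : ℕ, DifferentiableOn ℝ (X n) (Set.Ioi 0)) ∧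
      ∀ a : ℝ, 0 < a →
        Filter.Tendsto (fun n => deriv (X n) a) Filter.atTop
          (nhds (1 / (2 * Real.sqrt a))) := by
  have hX0' : X 0 = fun _ => c := funext hX0
  have hXs' : ∀ n, X (n + 1) = fun a => (X n a + a / X n a) / 2 := fun n => funext (hXs n)
  have hpos : ∀ a : ℝ, 0 < a → ∀ n, 0 < X n a := by
    intro a ha n
    induction n with
    | zero => rw [hX0]; exact hc
    | succ n ih => rw [hXs]; positivity
  have hdiff : ∀ n, ∀ a : ℝ, 0 < a → DifferentiableAt ℝ (X n) a := by
    intro n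
    induction n with
    | zero => intro a _; rw [hX0']; exact differentiableAt_const c
    | succ n ih =>
      intro a ha
      rw [hXs' n]
      exact ((ih a ha).add ((differentiableAt_fun_id).div (ih a ha) (hpos a ha n).ne')).div_const 2
  refine ⟨fun n a ha => (hdiff n a ha).differentiableWithinAt, ?_⟩
  intro a ha
  set s := Real.sqrt a with hs
  have hsp : 0 < s := Real.sqrt_pos.mpr ha
  have hs2 : s ^ 2 = a := Real.sq_sqrt ha.le
  -- derivative recursion
  have hder : ∀ n, deriv (X (n + 1)) a
      = deriv (X n) a * ((1 - a / (X n a) ^ 2) / 2) + 1 / (2 * X n a) := by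
    intro n
    have hx := hpos a ha n
    have hd := (hdiff n a ha).hasDerivAt
    have h1 : HasDerivAt (fun b : ℝ => b / X n b)
        ((1 * X n a - a * deriv (X n) a) / (X n a) ^ 2) a :=
      (hasDerivAt_id a).div hd hx.ne'
    have h2 : HasDerivAt (X (n + 1))
        ((deriv (X n) a + (1 * X n a - a * deriv (X n) a) / (X n a) ^ 2) / 2) a := by
      rw [hXs' n]; exact (hd.add h1).div_const 2
    rw [h2.deriv]
    field_simp
    ring
  -- key identity : next iterate minus s
  have hid : ∀ n, X (n + 1) a - s = (X n a - s) ^ 2 / (2 * X n a) := by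
    intro n
    have hx := hpos a ha n
    rw [hXs]
    field_simp
    nlinarith [hs2]
  have hge : ∀ n, s ≤ X (n + 1) a := by
    intro n
    have hx := hpos a ha n
    nlinarith [hid n, sq_nonneg (X n a - s), div_nonneg (sq_nonneg (X n a - s)) (by positivity : (0:ℝ) ≤ 2 * X n a)]
  have hdecay : ∀ n, X (n + 2) a - s ≤ (X (n + 1) a - s) / 2 := by
    intro n
    have hx := hpos a ha (n + 1)
    have h1 := hge n
    rw [hid (n + 1), div_le_div_iff₀ (by positivity) two_pos]
    nlinarith [mul_nonneg (sub_nonneg.mpr h1) hsp.le]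
  -- geometric bound
  have hgeo : ∀ n, X (n + 1) a - s ≤ (X 1 a - s) * (1 / 2) ^ n := by
    intro n
    induction n with
    | zero => simp
    | succ n ih =>
      calc X (n + 2) a - s ≤ (X (n + 1) a - s) / 2 := hdecay n
        _ ≤ ((X 1 a - s) * (1 / 2) ^ n) / 2 := by linarith
        _ = (X 1 a - s) * (1 / 2) ^ (n + 1) := by ring
  -- convergence of iterates (shifted)
  have hy : Filter.Tendsto (fun n => X (n + 1) a) Filter.atTop (nhds s) := by
    have h0 : Filter.Tendsto (fun n : ℕ => (X 1 a - s) * (1 / 2) ^ n) Filter.atTop (nhds 0) := by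
      have := tendsto_pow_atTop_nhds_zero_of_lt_one (by norm_num : (0:ℝ) ≤ 1 / 2) (by norm_num)
      simpa using this.const_mul (X 1 a - s)
    have : Filter.Tendsto (fun n => X (n + 1) a - s) Filter.atTop (nhds 0) := by
      apply squeeze_zero (fun n => sub_nonneg.mpr (hge n)) hgeo h0
    have h2 := this.add_const s
    simpa using h2
  -- boundedness of derivatives
  set D : ℕ → ℝ := fun n => deriv (X (n + 1)) a with hD
  set L : ℕ → ℝ := fun n => (1 - a / (X (n + 1) a) ^ 2) / 2 with hL
  have hLmem : ∀ n, 0 ≤ L n ∧ L n ≤ 1 / 2 := by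
    intro n
    have h1 := hge n
    have hx := hpos a ha (n + 1)
    have hdiv : a / (X (n + 1) a) ^ 2 ≤ 1 := by
      rw [div_le_one (by positivity)]
      nlinarith [hs2]
    have hdiv0 : 0 ≤ a / (X (n + 1) a) ^ 2 := by positivity
    constructor <;> simp only [hL] <;> linarith
  have hrec : ∀ n, D (n + 1) = D n * L n + 1 / (2 * X (n + 1) a) := fun n => hder (n + 1)
  set M : ℝ := max |D 0| (1 / s) with hM
  have hMb : ∀ n, |D n| ≤ M := by
    intro n
    induction n with
    | zero => exact le_max_left _ _
    | succ n ih =>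
      have h1 := hge n
      have hx := hpos a ha (n + 1)
      have hL1 := hLmem n
      have hinv : 1 / (2 * X (n + 1) a) ≤ 1 / (2 * s) := by
        apply one_div_le_one_div_of_le (by positivity)
        linarith
      have hinv0 : 0 < 1 / (2 * X (n + 1) a) := by positivity
      have hM2 : 1 / s ≤ M := le_max_right _ _
      rw [hrec n]
      calc |D n * L n + 1 / (2 * X (n + 1) a)|
          ≤ |D n * L n| + |1 / (2 * X (n + 1) a)| := abs_add_le _ _
        _ = |D n| * L n + 1 / (2 * X (n + 1) a) := by
            rw [abs_mul, abs_of_nonneg hL1.1, abs_of_pos hinv0]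
        _ ≤ M * (1 / 2) + 1 / (2 * s) := by
            have := mul_le_mul ih hL1.2 hL1.1 ((abs_nonneg (D 0)).trans (le_max_left _ _))
            linarith
        _ ≤ M := by
            have : 1 / (2 * s) = (1 / s) / 2 := by ring
            rw [this]; linarith
  -- limits of auxiliary sequences
  have hLlim : Filter.Tendsto L Filter.atTop (nhds 0) := by
    have h1 : Filter.Tendsto (fun n => (X (n + 1) a) ^ 2) Filter.atTop (nhds (s ^ 2)) := hy.pow 2
    have h2 : Filter.Tendsto (fun n => a / (X (n + 1) a) ^ 2) Filter.atTop (nhds (a / s ^ 2)) :=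
      tendsto_const_nhds.div h1 (by positivity)
    have h3 := ((tendsto_const_nhds (x := (1:ℝ))).sub h2).div_const 2
    have : (1 - a / s ^ 2) / 2 = 0 := by rw [hs2]; field_simp; norm_num
    rw [this] at h3
    exact h3
  have hmul : Filter.Tendsto (fun n => D n * L n) Filter.atTop (nhds 0) := by
    have hb : ∀ n, ‖D n * L n‖ ≤ M * L n := by
      intro n
      have hL1 := hLmem n
      calc ‖D n * L n‖ = |D n| * L n := by
            rw [norm_mul, Real.norm_eq_abs, Real.norm_eq_abs, abs_of_nonneg hL1.1]
        _ ≤ M * L n := mul_le_mul_of_nonneg_right (hMb n) hL1.1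
    exact squeeze_zero_norm hb (by simpa using hLlim.const_mul M)
  have hinvlim : Filter.Tendsto (fun n => 1 / (2 * X (n + 1) a)) Filter.atTop (nhds (1 / (2 * s))) :=
    tendsto_const_nhds.div (hy.const_mul 2) (by positivity)
  have hDlim : Filter.Tendsto (fun n => D (n + 1)) Filter.atTop (nhds (1 / (2 * s))) := by
    have := hmul.add hinvlim
    rw [zero_add] at this
    exact this.congr fun n => (hrec n).symm
  have hD2 : Filter.Tendsto D Filter.atTop (nhds (1 / (2 * s))) :=
    (Filter.tendsto_add_atTop_iff_nat 1).mp hDlim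
  exact (Filter.tendsto_add_atTop_iff_nat 1).mp hD2
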